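/- Let g be simple with (Z,α)-grading, γ_α(k) = (k/(2h* r_α))·Σ_{i≥1} q_α(ki) the Casimir C_α(0)-eigenvalue on g_α(k), and d = d_α. Then 2γ_α(1) > γ_α(2); moreover, if d is odd then γ_α(1) > γ_α(2). -/

import Mathlib

open scoped RealInnerProductSpace
open scoped Classical

/-- An (irreducible, reduced, crystallographic) root system in a real inner product
space `V`, together with a choice of base (simple roots), coordinate functions with
respect to the base, and fundamental weights. -/
structure RootSystemData (V : Type*) [NormedAddCommGroup V] [InnerProductSpace ℝ V] where
  Δ : Finset V
  base : Finset V
  base_sub : base ⊆ Δ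
  root_ne_zero : ∀ γ ∈ Δ, γ ≠ 0
  span_eq_top : Submodule.span ℝ (Δ : Set V) = ⊤
  reflect_mem : ∀ γ ∈ Δ, ∀ δ ∈ Δ, δ - (2 * ⟪δ, γ⟫ / ⟪γ, γ⟫) • γ ∈ Δ
  crystallographic : ∀ γ ∈ Δ, ∀ δ ∈ Δ, ∃ k : ℤ, 2 * ⟪δ, γ⟫ / ⟪γ, γ⟫ = (k : ℝ)
  reduced : ∀ γ ∈ Δ, (2 : ℝ) • γ ∉ Δ
  coord : V → V → ℝ
  coord_add : ∀ α x y, coord (x + y) α = coord x α + coord y α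
  coord_smul : ∀ α (c : ℝ) (x : V), coord (c • x) α = c * coord x α
  coord_base : ∀ α ∈ base, ∀ β ∈ base, coord β α = if β = α then 1 else 0
  root_decomp : ∀ γ ∈ Δ, γ = ∑ α ∈ base, coord γ α • α
  pos_or_neg : ∀ γ ∈ Δ, (∀ α ∈ base, 0 ≤ coord γ α) ∨ (∀ α ∈ base, coord γ α ≤ 0)
  coord_int : ∀ γ ∈ Δ, ∀ α ∈ base, ∃ k : ℤ, coord γ α = (k : ℝ)
  irreducible : ∀ S ⊆ Δ, S.Nonempty →
    (∀ γ ∈ S, ∀ δ ∈ Δ, δ ∉ S → ⟪γ, δ⟫ = 0) → S = Δ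
  fw : V → V
  fw_spec : ∀ α ∈ base, ∀ β ∈ base, ⟪fw α, β⟫ = if β = α then ⟪α, α⟫ / 2 else 0

namespace RootSystemData

variable {V : Type*} [NormedAddCommGroup V] [InnerProductSpace ℝ V]

/-- The set of positive roots (nonnegative coordinates w.r.t. the base). -/
noncomputable def posRoots (R : RootSystemData V) : Finset V :=
  R.Δ.filter fun γ => ∀ α ∈ R.base, 0 ≤ R.coord γ α

/-- The height of a root: the sum of its coordinates in the base. -/
noncomputable def ht (R : RootSystemData V) (γ : V) : ℝ :=
  ∑ α ∈ R.base, R.coord γ α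

/-- The height of the coroot `γ^∨` in the dual root system. -/
noncomputable def dualHt (R : RootSystemData V) (γ : V) : ℝ :=
  ∑ α ∈ R.base, R.coord γ α * ⟪α, α⟫ / ⟪γ, γ⟫

/-- `R_α`: the set of roots having positive inner product with the fundamental
weight `ϖ_α`. -/
noncomputable def Rset (R : RootSystemData V) (α : V) : Finset V :=
  R.Δ.filter fun γ => 0 < ⟪γ, R.fw α⟫

/-- `Δ_α(i)`: the set of roots whose coefficient of `α` equals `i`. -/
noncomputable def level (R : RootSystemData V) (α : V) (i : ℤ) : Finset V :=
  R.Δ.filter fun γ => R.coord γ α = (i : ℝ)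

end RootSystemData

namespace RootSystemData

variable {V : Type*} [NormedAddCommGroup V] [InnerProductSpace ℝ V] (R : RootSystemData V)

lemma aux_inner_self_pos {γ : V} (h : γ ∈ R.Δ) : 0 < ⟪γ, γ⟫ :=
  lt_of_le_of_ne real_inner_self_nonneg
    (Ne.symm ((@inner_self_ne_zero ℝ _ _ _ _ γ).mpr (R.root_ne_zero γ h)))

lemma aux_neg_mem {γ : V} (h : γ ∈ R.Δ) : -γ ∈ R.Δ := by
  have h2 := R.reflect_mem γ h γ h
  have hne : ⟪γ, γ⟫ ≠ 0 := ne_of_gt (R.aux_inner_self_pos h)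
  have he : 2 * ⟪γ, γ⟫ / ⟪γ, γ⟫ = 2 := by field_simp
  rw [he] at h2
  have : γ - (2 : ℝ) • γ = -γ := by module
  rwa [this] at h2

lemma aux_coord_neg (α γ : V) : R.coord (-γ) α = -R.coord γ α := by
  have := R.coord_smul α (-1) γ
  simpa using this

lemma aux_coord_sub (α x y : V) : R.coord (x - y) α = R.coord x α - R.coord y α := by
  have h1 := R.coord_add α x (-y)
  rw [← sub_eq_add_neg] at h1
  rw [h1, R.aux_coord_neg]
  ring

lemma aux_coord_smul_sub (α : V) (c : ℝ) (x y : V) :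
    R.coord (x - c • y) α = R.coord x α - c * R.coord y α := by
  rw [R.aux_coord_sub, R.coord_smul]

lemma aux_inner_fw {α : V} (hα : α ∈ R.base) {γ : V} (hγ : γ ∈ R.Δ) :
    ⟪γ, R.fw α⟫ = R.coord γ α * (⟪α, α⟫ / 2) := by
  conv_lhs => rw [R.root_decomp γ hγ]
  rw [sum_inner]
  rw [Finset.sum_eq_single α]
  · rw [real_inner_smul_left, real_inner_comm, R.fw_spec α hα α hα, if_pos rfl]
  · intro β hβ hne
    rw [real_inner_smul_left, real_inner_comm, R.fw_spec α hα β hβ, if_neg hne, mul_zero]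
  · intro h; exact absurd hα h

lemma aux_fw_inner_self_pos {α : V} (hα : α ∈ R.base) : 0 < ⟪R.fw α, R.fw α⟫ := by
  have hαα : 0 < ⟪α, α⟫ := R.aux_inner_self_pos (R.base_sub hα)
  have h : ⟪R.fw α, α⟫ = ⟪α, α⟫ / 2 := by rw [R.fw_spec α hα α hα, if_pos rfl]
  have hne : R.fw α ≠ 0 := by
    intro h0
    rw [h0, inner_zero_left] at h
    linarith
  exact lt_of_le_of_ne real_inner_self_nonneg
    (Ne.symm ((@inner_self_ne_zero ℝ _ _ _ _ (R.fw α)).mpr hne))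

end RootSystemData

/-- With `γ_α(k) = (k/(2h* r_α))·Σ_{i≥1} q_α(ki)` the Casimir
eigenvalue on `g_α(k)`, one has `2γ_α(1) > γ_α(2)`; moreover if `d = d_α` is odd then
`γ_α(1) > γ_α(2)`. -/
theorem two_gamma_one_gt_gamma_two
    {V : Type*} [NormedAddCommGroup V] [InnerProductSpace ℝ V]
    (R : RootSystemData V) (α : V) (hα : α ∈ R.base)
    (θ : V) (hθ : θ ∈ R.Δ)
    (hθmax : ∀ γ ∈ R.Δ, ∀ β ∈ R.base, R.coord γ β ≤ R.coord θ β)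
    (d : ℕ) (hd : (d : ℝ) = R.coord θ α)
    (qfun : ℕ → ℝ)
    (hqfun : ∀ i : ℕ, (∑ γ ∈ R.level α (i : ℤ), γ) = qfun i • R.fw α) :
    2 * ((1 / (2 * (R.dualHt θ + 1) * (⟪θ, θ⟫ / ⟪α, α⟫))) * ∑ i ∈ Finset.Icc 1 d, qfun i)
      > (2 / (2 * (R.dualHt θ + 1) * (⟪θ, θ⟫ / ⟪α, α⟫)))
          * ∑ i ∈ (Finset.Icc 1 d).filter (fun i => 2 * i ≤ d), qfun (2 * i) ∧
    (Odd d →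
      (1 / (2 * (R.dualHt θ + 1) * (⟪θ, θ⟫ / ⟪α, α⟫))) * ∑ i ∈ Finset.Icc 1 d, qfun i
        > (2 / (2 * (R.dualHt θ + 1) * (⟪θ, θ⟫ / ⟪α, α⟫)))
            * ∑ i ∈ (Finset.Icc 1 d).filter (fun i => 2 * i ≤ d), qfun (2 * i)) := by
  classical
  have hαΔ : α ∈ R.Δ := R.base_sub hα
  have hαα : 0 < ⟪α, α⟫ := R.aux_inner_self_pos hαΔ
  have hθθ : 0 < ⟪θ, θ⟫ := R.aux_inner_self_pos hθ
  have hϖϖ : 0 < ⟪R.fw α, R.fw α⟫ := R.aux_fw_inner_self_pos hα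
  have hmem_level : ∀ (i : ℤ) (γ : V), γ ∈ R.level α i ↔ γ ∈ R.Δ ∧ R.coord γ α = (i : ℝ) := by
    intro i γ; simp [RootSystemData.level]
  have hθc : ∀ β ∈ R.base, (1:ℝ) ≤ R.coord θ β := by
    intro β hβ
    have h1 := hθmax β (R.base_sub hβ) β hβ
    rwa [R.coord_base β hβ β hβ, if_pos rfl] at h1
  have hd1 : 1 ≤ d := by
    have h := hθc α hα
    rw [← hd] at h
    exact_mod_cast h
  set C := 2 * (R.dualHt θ + 1) * (⟪θ, θ⟫ / ⟪α, α⟫) with hCdef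
  have hCpos : 0 < C := by
    have hdh : 0 ≤ R.dualHt θ := by
      apply Finset.sum_nonneg
      intro β hβ
      have h1 : (0:ℝ) ≤ R.coord θ β := le_trans zero_le_one (hθc β hβ)
      have h2 : 0 < ⟪β, β⟫ := R.aux_inner_self_pos (R.base_sub hβ)
      positivity
    have h3 : 0 < ⟪θ, θ⟫ / ⟪α, α⟫ := div_pos hθθ hαα
    have h4 : 0 < R.dualHt θ + 1 := by linarith
    positivity
  -- q formula 1
  have hq1 : ∀ i : ℕ, qfun i * ⟪R.fw α, R.fw α⟫
      = (i : ℝ) * ((R.level α (i : ℤ)).card : ℝ) * (⟪α, α⟫ / 2) := by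
    intro i
    have h := congrArg (fun x => ⟪x, R.fw α⟫) (hqfun i)
    simp only [sum_inner, real_inner_smul_left] at h
    have hsum : ∑ γ ∈ R.level α (i : ℤ), ⟪γ, R.fw α⟫
        = (R.level α (i : ℤ)).card • ((i : ℝ) * (⟪α, α⟫ / 2)) := by
      apply Finset.sum_eq_card_nsmul
      intro γ hγ
      rw [hmem_level] at hγ
      rw [R.aux_inner_fw hα hγ.1, hγ.2]
      push_cast
      ring
    rw [hsum, nsmul_eq_mul] at h
    rw [← h]
    ring
  have hqeq : ∀ i : ℕ, qfun i
      = (i : ℝ) * ((R.level α (i : ℤ)).card : ℝ) * (⟪α, α⟫ / 2) / ⟪R.fw α, R.fw α⟫ := by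
    intro i
    rw [eq_div_iff (ne_of_gt hϖϖ)]
    exact hq1 i
  have hqnn : ∀ i : ℕ, 0 ≤ qfun i := by
    intro i
    rw [hqeq i]
    positivity
  have hqpos : ∀ i : ℕ, 1 ≤ i → (R.level α (i : ℤ)).Nonempty → 0 < qfun i := by
    intro i hi hne
    have hcard : 0 < ((R.level α (i : ℤ)).card : ℝ) := by
      exact_mod_cast Finset.card_pos.mpr hne
    have hiR : (0:ℝ) < (i : ℝ) := by
      have : (1:ℝ) ≤ (i : ℝ) := by exact_mod_cast hi
      linarith
    rw [hqeq i]
    have h2 : (0:ℝ) < ⟪α, α⟫ / 2 := by linarith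
    exact div_pos (mul_pos (mul_pos hiR hcard) h2) hϖϖ
  have hα1 : α ∈ R.level α (1 : ℤ) := by
    rw [hmem_level]
    refine ⟨hαΔ, ?_⟩
    rw [R.coord_base α hα α hα, if_pos rfl]
    norm_num
  have hθd : θ ∈ R.level α (d : ℤ) := by
    rw [hmem_level]
    refine ⟨hθ, ?_⟩
    rw [← hd]
    push_cast
    ring
  have hq1pos : 0 < qfun 1 := hqpos 1 le_rfl ⟨α, hα1⟩
  have hqdpos : 0 < qfun d := hqpos d hd1 ⟨θ, hθd⟩
  -- q formula 2: inner with θ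
  have hq2 : ∀ i : ℕ, qfun i * ((d : ℝ) * (⟪α, α⟫ / 2)) = ∑ γ ∈ R.level α (i : ℤ), ⟪γ, θ⟫ := by
    intro i
    have h := congrArg (fun x => ⟪x, θ⟫) (hqfun i)
    simp only [sum_inner, real_inner_smul_left] at h
    rw [h, real_inner_comm θ (R.fw α), R.aux_inner_fw hα hθ, ← hd]
  -- pairing values lemma
  have hpair : ∀ i : ℤ, 1 ≤ i → i ≤ (d : ℤ) - 1 → ∀ γ ∈ R.level α i,
      2 * ⟪γ, θ⟫ / ⟪θ, θ⟫ = 0 ∨ 2 * ⟪γ, θ⟫ / ⟪θ, θ⟫ = 1 := by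
    intro i hi1 hi2 γ hγ
    rw [hmem_level] at hγ
    obtain ⟨hγΔ, hγc⟩ := hγ
    obtain ⟨k, hk⟩ := R.crystallographic θ hθ γ hγΔ
    have hrefl := R.reflect_mem θ hθ γ hγΔ
    rw [hk] at hrefl
    have hcr : R.coord (γ - (k : ℝ) • θ) α = (i : ℝ) - (k : ℝ) * (d : ℝ) := by
      rw [R.aux_coord_smul_sub, hγc, ← hd]
    have hbound := hθmax _ hrefl α hα
    rw [hcr, ← hd] at hbound
    have hrefl2 := R.aux_neg_mem hrefl
    have hbound2 := hθmax _ hrefl2 α hα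
    rw [R.aux_coord_neg, hcr, ← hd] at hbound2
    have hiR1 : (1:ℝ) ≤ (i : ℝ) := by exact_mod_cast hi1
    have hiR2 : (i : ℝ) ≤ (d : ℝ) - 1 := by
      have : ((i : ℤ) : ℝ) ≤ (((d : ℤ) - 1 : ℤ) : ℝ) := by exact_mod_cast hi2
      push_cast at this
      linarith
    have hdR : (1:ℝ) ≤ (d : ℝ) := by exact_mod_cast hd1
    have hk01 : k = 0 ∨ k = 1 := by
      rcases lt_trichotomy k 0 with h | h | h
      · exfalso
        have hkR : (k : ℝ) ≤ -1 := by
          have hk1 : k ≤ -1 := by omega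
          exact_mod_cast hk1
        nlinarith
      · left; exact h
      · rcases eq_or_lt_of_le (show (1:ℤ) ≤ k by omega) with h1 | h1
        · right; omega
        · exfalso
          have hkR : (2:ℝ) ≤ (k : ℝ) := by exact_mod_cast (show (2:ℤ) ≤ k by omega)
          nlinarith
    rcases hk01 with h | h
    · left; rw [hk, h]; norm_num
    · right; rw [hk, h]; norm_num
  -- bijection on pairing-one sets
  have hmapto : ∀ i : ℤ, 1 ≤ i → i ≤ (d : ℤ) - 1 →
      ∀ γ ∈ (R.level α i).filter (fun γ => 2 * ⟪γ, θ⟫ / ⟪θ, θ⟫ = 1),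
      θ - γ ∈ (R.level α ((d : ℤ) - i)).filter (fun γ => 2 * ⟪γ, θ⟫ / ⟪θ, θ⟫ = 1) := by
    intro i hi1 hi2 γ hγ
    rw [Finset.mem_filter] at hγ
    obtain ⟨hγl, hp⟩ := hγ
    rw [hmem_level] at hγl
    obtain ⟨hγΔ, hγc⟩ := hγl
    have hp' : 2 * ⟪γ, θ⟫ = ⟪θ, θ⟫ := by
      field_simp at hp
      linarith
    have hrefl := R.reflect_mem θ hθ γ hγΔ
    rw [hp, one_smul] at hrefl
    have hmem : θ - γ ∈ R.Δ := by
      have := R.aux_neg_mem hrefl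
      rwa [neg_sub] at this
    rw [Finset.mem_filter, hmem_level]
    refine ⟨⟨hmem, ?_⟩, ?_⟩
    · rw [R.aux_coord_sub, hγc, ← hd]
      push_cast
      ring
    · rw [inner_sub_left]
      rw [div_eq_one_iff_eq (ne_of_gt hθθ)]
      linarith
  have hAcard : ∀ i : ℤ, 1 ≤ i → i ≤ (d : ℤ) - 1 →
      ((R.level α i).filter (fun γ => 2 * ⟪γ, θ⟫ / ⟪θ, θ⟫ = 1)).card
      = ((R.level α ((d : ℤ) - i)).filter (fun γ => 2 * ⟪γ, θ⟫ / ⟪θ, θ⟫ = 1)).card := by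
    intro i hi1 hi2
    have hi1' : 1 ≤ (d : ℤ) - i := by omega
    have hi2' : (d : ℤ) - i ≤ (d : ℤ) - 1 := by omega
    apply Finset.card_nbij' (fun γ => θ - γ) (fun γ => θ - γ)
    · exact hmapto i hi1 hi2
    · intro γ hγ
      have h := hmapto _ hi1' hi2' γ hγ
      rwa [show (d : ℤ) - ((d : ℤ) - i) = i by ring] at h
    · intro γ _; exact sub_sub_cancel θ γ
    · intro γ _; exact sub_sub_cancel θ γ
  -- sum of pairings equals card of pairing-one set
  have hsn : ∀ i : ℤ, 1 ≤ i → i ≤ (d : ℤ) - 1 →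
      ∑ γ ∈ R.level α i, (2 * ⟪γ, θ⟫ / ⟪θ, θ⟫)
      = (((R.level α i).filter (fun γ => 2 * ⟪γ, θ⟫ / ⟪θ, θ⟫ = 1)).card : ℝ) := by
    intro i hi1 hi2
    rw [← Finset.sum_boole]
    apply Finset.sum_congr rfl
    intro γ hγ
    rcases hpair i hi1 hi2 γ hγ with h | h
    · rw [h, if_neg]; norm_num
    · rw [h, if_pos rfl]
  -- symmetry of qfun
  have hqsym : ∀ i : ℕ, 1 ≤ i → i ≤ d - 1 → qfun i = qfun (d - i) := by
    intro i hi1 hi2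
    have hiZ1 : (1:ℤ) ≤ (i : ℤ) := by exact_mod_cast hi1
    have hiled : i ≤ d := le_trans hi2 (Nat.sub_le d 1)
    have hiZ2 : (i : ℤ) ≤ (d : ℤ) - 1 := by omega
    have hcast : ((d - i : ℕ) : ℤ) = (d : ℤ) - (i : ℤ) := by omega
    have hconv : ∀ j : ℤ, ∑ γ ∈ R.level α j, ⟪γ, θ⟫
        = (⟪θ, θ⟫ / 2) * ∑ γ ∈ R.level α j, (2 * ⟪γ, θ⟫ / ⟪θ, θ⟫) := by
      intro j
      rw [Finset.mul_sum]
      apply Finset.sum_congr rfl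
      intro γ _
      field_simp
    have e1 := hq2 i
    have e2 := hq2 (d - i)
    rw [hconv, hsn i hiZ1 hiZ2] at e1
    rw [hcast] at e2
    rw [hconv, hsn ((d : ℤ) - i) (by omega) (by omega), ← hAcard i hiZ1 hiZ2] at e2
    have hdc : (0:ℝ) < (d : ℝ) * (⟪α, α⟫ / 2) := by
      have : (1:ℝ) ≤ (d : ℝ) := by exact_mod_cast hd1
      nlinarith
    have := e1.trans e2.symm
    exact mul_right_cancel₀ (ne_of_gt hdc) this
  -- final combinatorics
  set S := ∑ i ∈ Finset.Icc 1 d, qfun i with hS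
  set T := ∑ i ∈ (Finset.Icc 1 d).filter (fun i => 2 * i ≤ d), qfun (2 * i) with hT
  have hTE : T = ∑ j ∈ (Finset.Icc 1 d).filter (fun j => Even j), qfun j := by
    rw [hT]
    refine Finset.sum_nbij' (fun i => 2 * i) (fun j => j / 2) ?_ ?_ ?_ ?_ ?_
    · intro a ha
      simp only [Finset.mem_filter, Finset.mem_Icc, Nat.even_iff] at ha ⊢
      omega
    · intro b hb
      simp only [Finset.mem_filter, Finset.mem_Icc, Nat.even_iff] at hb ⊢
      omega
    · intro a ha
      simp only [Finset.mem_filter, Finset.mem_Icc] at ha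
      omega
    · intro b hb
      simp only [Finset.mem_filter, Finset.mem_Icc, Nat.even_iff] at hb
      omega
    · intro a _
      rfl
  have hSEO : S = (∑ j ∈ (Finset.Icc 1 d).filter (fun j => Even j), qfun j)
      + ∑ j ∈ (Finset.Icc 1 d).filter (fun j => ¬ Even j), qfun j :=
    (Finset.sum_filter_add_sum_filter_not _ _ _).symm
  have h1O : (1 : ℕ) ∈ (Finset.Icc 1 d).filter (fun j => ¬ Even j) := by
    simp only [Finset.mem_filter, Finset.mem_Icc]
    exact ⟨⟨le_rfl, hd1⟩, by decide⟩
  have hOge : qfun 1 ≤ ∑ j ∈ (Finset.Icc 1 d).filter (fun j => ¬ Even j), qfun j :=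
    Finset.single_le_sum (fun j _ => hqnn j) h1O
  have hST : T < S := by
    rw [hTE] at *
    linarith
  constructor
  · have h2C : 0 < 2 / C := by positivity
    have hmul := mul_lt_mul_of_pos_left hST h2C
    have e : 2 * ((1 / C) * S) = (2 / C) * S := by ring
    linarith
  · intro hodd
    rw [Nat.odd_iff] at hodd
    have hEOe : (∑ j ∈ (Finset.Icc 1 d).filter (fun j => Even j), qfun j)
        = ∑ j ∈ ((Finset.Icc 1 d).filter (fun j => ¬ Even j)).erase d, qfun j := by
      refine Finset.sum_nbij' (fun j => d - j) (fun j => d - j) ?_ ?_ ?_ ?_ ?_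
      · intro a ha
        simp only [Finset.mem_erase, Finset.mem_filter, Finset.mem_Icc, Nat.even_iff] at ha ⊢
        omega
      · intro b hb
        simp only [Finset.mem_erase, Finset.mem_filter, Finset.mem_Icc, Nat.even_iff] at hb ⊢
        omega
      · intro a ha
        simp only [Finset.mem_filter, Finset.mem_Icc] at ha
        omega
      · intro b hb
        simp only [Finset.mem_erase, Finset.mem_filter, Finset.mem_Icc] at hb
        omega
      · intro a ha
        simp only [Finset.mem_filter, Finset.mem_Icc, Nat.even_iff] at ha
        exact hqsym a ha.1.1 (by omega)
    have hdO : d ∈ (Finset.Icc 1 d).filter (fun j => ¬ Even j) := by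
      simp only [Finset.mem_filter, Finset.mem_Icc, Nat.even_iff]
      omega
    have hOsplit : (∑ j ∈ (Finset.Icc 1 d).filter (fun j => ¬ Even j), qfun j)
        = qfun d + ∑ j ∈ ((Finset.Icc 1 d).filter (fun j => ¬ Even j)).erase d, qfun j :=
      (Finset.add_sum_erase _ qfun hdO).symm
    have hS2T : S = 2 * T + qfun d := by
      rw [hSEO, hOsplit, hTE, hEOe]
      ring
    have e : (1 / C) * S - (2 / C) * T = (S - 2 * T) / C := by ring
    have hpos : 0 < (S - 2 * T) / C := div_pos (by linarith) hCpos
    linarith
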